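/- Let G be a compact Lie group and 𝒞 a family of orbit types of G with (G) ∈ 𝒞. Let 𝕐 be a metrizable G-space, 𝕏 ⊆ 𝕐 an OPEN invariant subspace, 𝕏′ a G-space of orbit type 𝒞, and h : 𝕏 → 𝕏′ an equigeny. Then there exist a G-space 𝕐′ of orbit type 𝒞, an equivariant embedding e of 𝕏′ onto an open invariant subset of 𝕐′, and an equigeny H : 𝕐 → 𝕐′ such that H restricted to 𝕏 equals e ∘ h. -/

import Mathlib

open scoped Manifold
open MulAction Set TopologicalSpace Topology

universe u v

/-- `G` is a compact Lie group: a compact topological group admitting a structure of a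
finite-dimensional real smooth manifold in which multiplication and inversion are smooth. -/
def IsCompactLieGroup (G : Type*) [Group G] [TopologicalSpace G] : Prop :=
  CompactSpace G ∧ IsTopologicalGroup G ∧
    ∃ (n : ℕ) (cs : ChartedSpace (EuclideanSpace ℝ (Fin n)) G),
      @LieGroup ℝ _ (EuclideanSpace ℝ (Fin n)) _ (EuclideanSpace ℝ (Fin n)) _ _ (𝓡 n) (⊤ : ℕ∞) G _ _ cs

variable (G : Type u) [Group G] [TopologicalSpace G]

/-- A subset of a `G`-space is invariant if it is stable under the action. -/
def IsInvariantSet {Z : Type*} [SMul G Z] (A : Set Z) : Prop :=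
  ∀ g : G, ∀ a ∈ A, g • a ∈ A

/-- A map is equivariant on a subset `A`. -/
def EquivariantOn {Z X : Type*} [SMul G Z] [SMul G X] (φ : Z → X) (A : Set Z) : Prop :=
  ∀ g : G, ∀ a ∈ A, φ (g • a) = g • φ a

/-- The invariant subset `S` of the `G`-space `X`, with the subspace topology and restricted
action, is an equivariant absolute neighborhood extensor (`G`-ANE): every partial `G`-map from a
closed invariant subset of a metrizable `G`-space with values in `S` extends to a `G`-map of an
invariant neighborhood with values in `S`. -/
def IsGANESubset (X : Type v) [TopologicalSpace X] [MulAction G X] (S : Set X) : Prop :=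
  ∀ (Z : Type u) [TopologicalSpace Z] [MulAction G Z], ContinuousSMul G Z →
    MetrizableSpace Z →
    ∀ A : Set Z, IsClosed A → IsInvariantSet G A →
    ∀ φ : Z → X, ContinuousOn φ A → EquivariantOn G φ A → MapsTo φ A S →
    ∃ U : Set Z, IsOpen U ∧ IsInvariantSet G U ∧ A ⊆ U ∧
      ∃ ψ : Z → X, ContinuousOn ψ U ∧ EquivariantOn G ψ U ∧ MapsTo ψ U S ∧ EqOn ψ φ A

/-- The `G`-space `X` is an equivariant absolute neighborhood extensor (`G`-ANE). -/
def IsGANE (X : Type v) [TopologicalSpace X] [MulAction G X] : Prop :=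
  IsGANESubset.{u, v} G X Set.univ

/-- The invariant subset `S` of the `G`-space `X` is an equivariant absolute extensor
(`G`-AE): every partial `G`-map from a closed invariant subset of a metrizable `G`-space with
values in `S` extends to a `G`-map of the whole space with values in `S`. -/
def IsGAESubset (X : Type v) [TopologicalSpace X] [MulAction G X] (S : Set X) : Prop :=
  ∀ (Z : Type u) [TopologicalSpace Z] [MulAction G Z], ContinuousSMul G Z →
    MetrizableSpace Z →
    ∀ A : Set Z, IsClosed A → IsInvariantSet G A →
    ∀ φ : Z → X, ContinuousOn φ A → EquivariantOn G φ A → MapsTo φ A S →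
    ∃ ψ : Z → X, Continuous ψ ∧ EquivariantOn G ψ Set.univ ∧ MapsTo ψ Set.univ S ∧ EqOn ψ φ A

/-- A map is isovariant on `A`: it is equivariant there and preserves isotropy subgroups. -/
def IsovariantOn {Z X : Type*} [SMul G Z] [SMul G X] (φ : Z → X) (A : Set Z) : Prop :=
  EquivariantOn G φ A ∧ ∀ a ∈ A, ∀ g : G, g • a = a ↔ g • φ a = φ a

/-- The `G`-space `X` is an isovariant absolute extensor: every partial isovariant map from a
closed invariant subset of a metrizable `G`-space extends to an isovariant map of the whole
space. -/
def IsIsovAE (X : Type v) [TopologicalSpace X] [MulAction G X] : Prop :=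
  ∀ (Z : Type u) [TopologicalSpace Z] [MulAction G Z], ContinuousSMul G Z →
    MetrizableSpace Z →
    ∀ A : Set Z, IsClosed A → IsInvariantSet G A →
    ∀ φ : Z → X, ContinuousOn φ A → IsovariantOn G φ A →
    ∃ ψ : Z → X, Continuous ψ ∧ IsovariantOn G ψ Set.univ ∧ EqOn ψ φ A

/-- `(K) ≤ (H)`: the subgroup `K` is contained in some conjugate of `H`. -/
def SubConj (K H : Subgroup G) : Prop :=
  ∃ g : G, K ≤ Subgroup.map (MulAut.conj g).toMonoidHom H

/-- A family of orbit types: a conjugation-invariant set of closed subgroups of `G`. -/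
def IsOrbitTypeFamily (𝒞 : Set (Subgroup G)) : Prop :=
  (∀ H ∈ 𝒞, IsClosed (H : Set G)) ∧
    ∀ H ∈ 𝒞, ∀ g : G, Subgroup.map (MulAut.conj g).toMonoidHom H ∈ 𝒞

/-- The map induced on orbit spaces by an equivariant map. -/
def orbitMapOf {X Y : Type*} [MulAction G X] [MulAction G Y] (f : X → Y)
    (hf : ∀ (g : G) (x : X), f (g • x) = g • f x) :
    Quotient (orbitRel G X) → Quotient (orbitRel G Y) :=
  Quotient.map f (fun a b hab => by
    have hab' : a ∈ orbit G b := hab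
    obtain ⟨g, rfl⟩ := hab'
    show f (g • b) ∈ orbit G (f b)
    exact ⟨g, (hf g b).symm⟩)

/-- An equivariant continuous map is an equigeny if the induced map of orbit spaces is a
homeomorphism. -/
def IsEquigeny {X Y : Type*} [TopologicalSpace X] [TopologicalSpace Y]
    [MulAction G X] [MulAction G Y] (f : X → Y) : Prop :=
  Continuous f ∧ ∃ hf : ∀ (g : G) (x : X), f (g • x) = g • f x,
    IsHomeomorph (orbitMapOf G f hf)

/-- The `G`-space `X` is an equivariant absolute extensor (`G`-AE). -/
def IsGAE (X : Type v) [TopologicalSpace X] [MulAction G X] : Prop :=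
  IsGAESubset.{u, v} G X Set.univ

/-- The problem of extending the equigeny `h : 𝕏 → 𝕏'` over the ambient `G`-space `𝕐 ⊇ 𝕏`
(where `𝕏` sits in `𝕐` via the equivariant embedding `j`) has a `𝒞`-solution: there are a
`G`-space `𝕐'` of orbit type `𝒞`, a closed equivariant embedding `e : 𝕏' → 𝕐'` and an
equigeny `H : 𝕐 → 𝕐'` extending `h`. -/
def SolvesEquigenyExt (𝒞 : Set (Subgroup G))
    (𝕐 : Type u) [TopologicalSpace 𝕐] [MulAction G 𝕐]
    (𝕏 : Type u) [TopologicalSpace 𝕏] [MulAction G 𝕏] (j : 𝕏 → 𝕐)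
    (𝕏' : Type u) [TopologicalSpace 𝕏'] [MulAction G 𝕏'] (h : 𝕏 → 𝕏') : Prop :=
  ∃ (𝕐' : Type u) (_ : TopologicalSpace 𝕐') (_ : MulAction G 𝕐'),
    ContinuousSMul G 𝕐' ∧ (∀ y : 𝕐', MulAction.stabilizer G y ∈ 𝒞) ∧
    ∃ e : 𝕏' → 𝕐', IsClosedEmbedding e ∧ (∀ (g : G) (x : 𝕏'), e (g • x) = g • e x) ∧
      ∃ H : 𝕐 → 𝕐', IsEquigeny G H ∧ H ∘ j = e ∘ h

/-- Variant of `SolvesEquigenyExt` in which `𝕏'` is required to be embedded onto an *open*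
invariant subset of `𝕐'`. -/
def SolvesEquigenyExtOpen (𝒞 : Set (Subgroup G))
    (𝕐 : Type u) [TopologicalSpace 𝕐] [MulAction G 𝕐]
    (𝕏 : Type u) [TopologicalSpace 𝕏] [MulAction G 𝕏] (j : 𝕏 → 𝕐)
    (𝕏' : Type u) [TopologicalSpace 𝕏'] [MulAction G 𝕏'] (h : 𝕏 → 𝕏') : Prop :=
  ∃ (𝕐' : Type u) (_ : TopologicalSpace 𝕐') (_ : MulAction G 𝕐'),
    ContinuousSMul G 𝕐' ∧ (∀ y : 𝕐', MulAction.stabilizer G y ∈ 𝒞) ∧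
    ∃ e : 𝕏' → 𝕐', IsOpenEmbedding e ∧ IsInvariantSet G (Set.range e) ∧
      (∀ (g : G) (x : 𝕏'), e (g • x) = g • e x) ∧
      ∃ H : 𝕐 → 𝕐', IsEquigeny G H ∧ H ∘ j = e ∘ h

section AuxExt

theorem IsCompactLieGroup.locallyCompactSpace {G : Type*} [Group G] [TopologicalSpace G]
    (hG : IsCompactLieGroup G) : LocallyCompactSpace G := by
  obtain ⟨_, _, n, cs, _⟩ := hG
  haveI := cs
  exact ChartedSpace.locallyCompactSpace (EuclideanSpace ℝ (Fin n)) G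

theorem Topology.IsQuotientMap.prodMapIdLeft {Z X Y : Type*} [TopologicalSpace Z] [TopologicalSpace X]
    [TopologicalSpace Y] [LocallyCompactSpace Z] {q : X → Y} (hq : Topology.IsQuotientMap q) :
    Topology.IsQuotientMap (Prod.map (id : Z → Z) q) := by
  rw [isQuotientMap_iff, isCoinducing_iff, and_comm]
  refine ⟨Function.Surjective.prodMap Function.surjective_id hq.surjective, fun W => Iff.symm ?_⟩
  refine ⟨fun hW => hW.preimage (continuous_id.prodMap hq.continuous), fun hP => ?_⟩
  rw [isOpen_iff_mem_nhds]
  rintro ⟨z, y⟩ hzy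
  obtain ⟨x, rfl⟩ := hq.surjective y
  have hmem : Prod.map (id : Z → Z) q ⁻¹' W ∈ 𝓝 (z, x) := hP.mem_nhds hzy
  rw [nhds_prod_eq, Filter.mem_prod_iff] at hmem
  obtain ⟨u, hu, v, hv, huv⟩ := hmem
  obtain ⟨K, hKz, hKu, hKc⟩ := local_compact_nhds hu
  set V : Set Y := {y' | ∀ k ∈ K, (k, y') ∈ W} with hV
  have hqV : q ⁻¹' V = {x' | ∀ k ∈ K, (k, x') ∈ Prod.map (id : Z → Z) q ⁻¹' W} := rfl
  have hVopen : IsOpen V := by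
    rw [← isCoinducing_iff.mp hq.isCoinducing, hqV, isOpen_iff_mem_nhds]
    intro x' hx'
    obtain ⟨u', v', hu'o, hv'o, hKu', hxv', hsub⟩ :=
      generalized_tube_lemma hKc isCompact_singleton hP
        (by rintro ⟨k, x''⟩ ⟨hk, (rfl : x'' = x')⟩; exact hx' k hk)
    refine Filter.mem_of_superset (hv'o.mem_nhds (hxv' rfl)) fun x'' hx'' k hk => ?_
    exact hsub ⟨hKu' hk, hx''⟩
  have hxV : q x ∈ V := fun k hk =>
    show Prod.map (id : Z → Z) q (k, x) ∈ W from huv ⟨hKu hk, mem_of_mem_nhds hv⟩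
  rw [nhds_prod_eq]
  exact Filter.mem_of_superset (Filter.prod_mem_prod hKz (hVopen.mem_nhds hxV))
    (fun p hp => hp.2 p.1 hp.1)

end AuxExt

section Glue

variable (G : Type u) [Group G] [TopologicalSpace G]

variable {𝕐 : Type u} [TopologicalSpace 𝕐] [MulAction G 𝕐]
variable {𝕏 : Type u} [TopologicalSpace 𝕏] [MulAction G 𝕏]
variable {𝕏' : Type u} [TopologicalSpace 𝕏'] [MulAction G 𝕏']

/-- The set of orbits of `𝕐` that do not meet the image of `j`. -/
structure ExtD (j : 𝕏 → 𝕐) : Type u where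
  c : Quotient (orbitRel G 𝕐)
  notin : c ∉ Set.range fun x : 𝕏 => Quotient.mk (orbitRel G 𝕐) (j x)

set_option linter.unusedSectionVars false in
theorem ExtD.ext' {j : 𝕏 → 𝕐} {d₁ d₂ : ExtD G j} (hd : d₁.c = d₂.c) : d₁ = d₂ := by
  cases d₁; cases d₂; cases hd; rfl

/-- The point of `ExtD` determined by a point of `𝕐` outside of the image of `j`. -/
def extDof {j : 𝕏 → 𝕐} (hjeq : ∀ (g : G) (x : 𝕏), j (g • x) = g • j x)
    (y : 𝕐) (hy : y ∉ Set.range j) : ExtD G j :=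
  ⟨Quotient.mk (orbitRel G 𝕐) y, by
    rintro ⟨x, hx⟩
    have hmem : j x ∈ orbit G y := Quotient.exact hx
    obtain ⟨g, hg⟩ := hmem
    exact hy ⟨g⁻¹ • x, by rw [hjeq, ← hg, inv_smul_smul]⟩⟩

/-- The action of `G` on the glued space: the given action on `𝕏'`, and the trivial action on
the orbit classes. -/
def extAction (j : 𝕏 → 𝕐) : MulAction G (𝕏' ⊕ ExtD G j) where
  smul g := Sum.map (fun x' => g • x') id
  one_smul v := by
    cases v with
    | inl x => show Sum.inl ((1 : G) • x) = Sum.inl x; rw [one_smul]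
    | inr d => rfl
  mul_smul g₁ g₂ v := by
    cases v with
    | inl x => show Sum.inl ((g₁ * g₂) • x) = Sum.inl (g₁ • g₂ • x); rw [mul_smul]
    | inr d => rfl

/-- The extension of `h` over `𝕐`, collapsing each orbit outside of `𝕏` to a point. -/
noncomputable def extH (j : 𝕏 → 𝕐) (hjeq : ∀ (g : G) (x : 𝕏), j (g • x) = g • j x) (h : 𝕏 → 𝕏') :
    𝕐 → 𝕏' ⊕ ExtD G j :=
  fun y =>
    letI := Classical.propDecidable (y ∈ Set.range j)
    if hy : y ∈ Set.range j then Sum.inl (h hy.choose) else Sum.inr (extDof G hjeq y hy)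

end Glue

set_option maxHeartbeats 1000000 in
/-- **Extension of equigenies, open case.** Let `G` be a compact Lie group and `𝒞` a family of
orbit types with `(G) ∈ 𝒞`. If `𝕏` is an open invariant subspace of a metrizable `G`-space `𝕐`
and `h : 𝕏 → 𝕏'` is an equigeny onto a `G`-space of orbit type `𝒞`, then there are a
`G`-space `𝕐'` of orbit type `𝒞`, an equivariant embedding `e` of `𝕏'` onto an open invariant
subset of `𝕐'` and an equigeny `H : 𝕐 → 𝕐'` with `H∣𝕏 = e ∘ h`. -/
theorem extend_equigeny_open (G : Type u) [Group G] [TopologicalSpace G]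
    (hG : IsCompactLieGroup G)
    (𝒞 : Set (Subgroup G)) (h𝒞 : IsOrbitTypeFamily G 𝒞) (htop : (⊤ : Subgroup G) ∈ 𝒞)
    (𝕐 : Type u) [TopologicalSpace 𝕐] [MulAction G 𝕐] [MetrizableSpace 𝕐]
    (h𝕐 : ContinuousSMul G 𝕐)
    (𝕏 : Type u) [TopologicalSpace 𝕏] [MulAction G 𝕏] (h𝕏 : ContinuousSMul G 𝕏)
    (j : 𝕏 → 𝕐) (hj : IsOpenEmbedding j) (hjeq : ∀ (g : G) (x : 𝕏), j (g • x) = g • j x)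
    (𝕏' : Type u) [TopologicalSpace 𝕏'] [MulAction G 𝕏'] (h𝕏' : ContinuousSMul G 𝕏')
    (htype : ∀ x : 𝕏', MulAction.stabilizer G x ∈ 𝒞)
    (h : 𝕏 → 𝕏') (hh : IsEquigeny G h) :
    SolvesEquigenyExtOpen G 𝒞 𝕐 𝕏 j 𝕏' h := by
  classical
  obtain ⟨hhc, hheq, hhomeo⟩ := hh
  obtain ⟨eh, heh⟩ := isHomeomorph_iff_exists_homeomorph.mp hhomeo
  haveI : LocallyCompactSpace G := hG.locallyCompactSpace
  haveI := h𝕐; haveI := h𝕏; haveI := h𝕏'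
  have hjinj : Function.Injective j := hj.injective
  letI ma : MulAction G (𝕏' ⊕ ExtD G j) := extAction G j
  set H : 𝕐 → 𝕏' ⊕ ExtD G j := extH G j hjeq h with hHdef
  set q : 𝕐 ⊕ 𝕏' → 𝕏' ⊕ ExtD G j := Sum.elim H Sum.inl with hqdef
  letI 𝒯 : TopologicalSpace (𝕏' ⊕ ExtD G j) := TopologicalSpace.coinduced q inferInstance
  -- basic computation rules for `H`
  have hH₁ : ∀ x : 𝕏, H (j x) = Sum.inl (h x) := by
    intro x
    have hy : j x ∈ Set.range j := ⟨x, rfl⟩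
    rw [hHdef]
    simp only [extH]
    rw [dif_pos hy, hjinj hy.choose_spec]
  have hH₂ : ∀ (y : 𝕐) (hy : y ∉ Set.range j), H y = Sum.inr (extDof G hjeq y hy) := by
    intro y hy
    rw [hHdef]
    simp only [extH]
    rw [dif_neg hy]
  have hnotin : ∀ (g : G) (y : 𝕐), y ∉ Set.range j → g • y ∉ Set.range j := by
    rintro g y hy ⟨x, hx⟩
    exact hy ⟨g⁻¹ • x, by rw [hjeq, hx, inv_smul_smul]⟩
  have hHeq : ∀ (g : G) (y : 𝕐), H (g • y) = g • H y := by
    intro g y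
    by_cases hy : y ∈ Set.range j
    · obtain ⟨x, rfl⟩ := hy
      rw [← hjeq, hH₁, hH₁, hheq]
      rfl
    · rw [hH₂ y hy, hH₂ (g • y) (hnotin g y hy)]
      exact congrArg Sum.inr (ExtD.ext' G (Quotient.sound (MulAction.mem_orbit _ g)))
  -- `q` is a quotient map
  have hqsurj : Function.Surjective q := by
    rintro (x' | d)
    · exact ⟨Sum.inr x', rfl⟩
    · obtain ⟨c, hc⟩ := d
      obtain ⟨y, rfl⟩ := Quotient.exists_rep c
      have hy : y ∉ Set.range j := by
        rintro ⟨x, hx⟩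
        exact hc ⟨x, congrArg (Quotient.mk (orbitRel G 𝕐)) hx⟩
      refine ⟨Sum.inl y, ?_⟩
      show H y = _
      rw [hH₂ y hy]
      exact congrArg Sum.inr (ExtD.ext' G rfl)
  have hq : Topology.IsQuotientMap q := ⟨⟨rfl⟩, hqsurj⟩
  have hHcont : Continuous H := hq.continuous.comp continuous_inl
  have hecont : Continuous (Sum.inl : 𝕏' → 𝕏' ⊕ ExtD G j) := hq.continuous.comp continuous_inr
  -- the open sets of the glued space
  have hopenV : ∀ V : Set (𝕏' ⊕ ExtD G j),
      IsOpen V ↔ IsOpen (H ⁻¹' V) ∧ IsOpen (Sum.inl ⁻¹' V) := by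
    intro V
    rw [isOpen_coinduced (f := q), isOpen_sum_iff]
    exact Iff.rfl
  -- joint continuity of the action
  have hsmul : Continuous (fun p : G × (𝕏' ⊕ ExtD G j) => p.1 • p.2) := by
    have hq2 : Topology.IsQuotientMap (Prod.map (id : G → G) q) := hq.prodMapIdLeft
    rw [hq2.continuous_iff]
    have heqfun : (fun p : G × (𝕏' ⊕ ExtD G j) => p.1 • p.2) ∘ Prod.map (id : G → G) q
        = Sum.elim (fun p : G × 𝕐 => H (p.1 • p.2))
            (fun p : G × 𝕏' => (Sum.inl (p.1 • p.2) : 𝕏' ⊕ ExtD G j))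
          ∘ (Homeomorph.prodSumDistrib (X := G) (Y := 𝕐) (Z := 𝕏')) := by
      funext gw
      obtain ⟨g, w⟩ := gw
      cases w with
      | inl y => exact (hHeq g y).symm
      | inr x' => rfl
    rw [heqfun]
    exact (Continuous.sumElim (hHcont.comp continuous_smul)
      (hecont.comp continuous_smul)).comp (Homeomorph.prodSumDistrib (X := G) (Y := 𝕐) (Z := 𝕏')).continuous
  -- stabilizers
  have hstab : ∀ v : 𝕏' ⊕ ExtD G j, stabilizer G v ∈ 𝒞 := by
    intro v
    cases v with
    | inl x' =>
      have hs : stabilizer G (Sum.inl x' : 𝕏' ⊕ ExtD G j) = stabilizer G x' := by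
        ext g
        simp only [mem_stabilizer_iff]
        exact ⟨fun hg => Sum.inl_injective hg, fun hg => congrArg Sum.inl hg⟩
      rw [hs]; exact htype x'
    | inr d =>
      have hs : stabilizer G (Sum.inr d : 𝕏' ⊕ ExtD G j) = ⊤ := by
        ext g
        simp only [mem_stabilizer_iff, Subgroup.mem_top, iff_true]
        rfl
      rw [hs]; exact htop
  refine ⟨𝕏' ⊕ ExtD G j, 𝒯, ma, ⟨hsmul⟩, hstab, Sum.inl, ?_, ?_, fun g x' => rfl, H,
    ⟨hHcont, hHeq, ?_⟩, funext hH₁⟩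
  · -- open embedding
    refine IsOpenEmbedding.of_continuous_injective_isOpenMap hecont Sum.inl_injective ?_
    intro U hU
    rw [hopenV]
    constructor
    · have himg : H ⁻¹' (Sum.inl '' U) = j '' (h ⁻¹' U) := by
        ext y
        constructor
        · rintro ⟨u, hu, hEq⟩
          by_cases hy : y ∈ Set.range j
          · obtain ⟨x, rfl⟩ := hy
            rw [hH₁] at hEq
            refine ⟨x, ?_, rfl⟩
            have hux : u = h x := Sum.inl_injective hEq
            rw [hux] at hu
            exact hu
          · rw [hH₂ y hy] at hEq
            exact (Sum.inl_ne_inr hEq).elim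
        · rintro ⟨x, hx, rfl⟩
          rw [Set.mem_preimage, hH₁]
          exact ⟨h x, hx, rfl⟩
      rw [himg]
      exact hj.isOpenMap _ (hU.preimage hhc)
    · rw [Set.preimage_image_eq U Sum.inl_injective]
      exact hU
  · -- invariant range
    rintro g v ⟨x', rfl⟩
    exact ⟨g • x', rfl⟩
  · -- the induced map of orbit spaces is a homeomorphism
    rw [isHomeomorph_iff_exists_inverse]
    set f' : (𝕏' ⊕ ExtD G j) → Quotient (orbitRel G 𝕐) :=
      Sum.elim (fun x' => orbitMapOf G j hjeq (eh.symm (Quotient.mk (orbitRel G 𝕏') x')))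
        (fun d => d.c) with hf'def
    have hf'resp : ∀ a b : 𝕏' ⊕ ExtD G j, (orbitRel G (𝕏' ⊕ ExtD G j)).r a b → f' a = f' b := by
      intro a b hab
      have hab' : a ∈ orbit G b := hab
      obtain ⟨g, rfl⟩ := hab'
      cases b with
      | inl x' =>
        show f' (Sum.inl (g • x')) = f' (Sum.inl x')
        simp only [hf'def, Sum.elim_inl]
        exact congrArg _ (congrArg _ (Quotient.sound (MulAction.mem_orbit _ g)))
      | inr d => rfl
    have hfH : ∀ y : 𝕐, f' (H y) = Quotient.mk (orbitRel G 𝕐) y := by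
      intro y
      by_cases hy : y ∈ Set.range j
      · obtain ⟨x, rfl⟩ := hy
        rw [hH₁]
        show orbitMapOf G j hjeq (eh.symm (Quotient.mk (orbitRel G 𝕏') (h x))) = _
        have h1 : Quotient.mk (orbitRel G 𝕏') (h x) = eh (Quotient.mk (orbitRel G 𝕏) x) := by
          rw [heh]; rfl
        rw [h1, Homeomorph.symm_apply_apply]
        rfl
      · rw [hH₂ y hy]; rfl
    have hL : ∀ y : 𝕐, Quotient.lift f' hf'resp
        (orbitMapOf G H hHeq (Quotient.mk (orbitRel G 𝕐) y)) = Quotient.mk (orbitRel G 𝕐) y :=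
      fun y => hfH y
    have hR : ∀ v : 𝕏' ⊕ ExtD G j, orbitMapOf G H hHeq
        (Quotient.lift f' hf'resp (Quotient.mk (orbitRel G (𝕏' ⊕ ExtD G j)) v))
        = Quotient.mk (orbitRel G (𝕏' ⊕ ExtD G j)) v := by
      intro v
      cases v with
      | inl x' =>
        show orbitMapOf G H hHeq (orbitMapOf G j hjeq (eh.symm (Quotient.mk (orbitRel G 𝕏') x')))
          = Quotient.mk (orbitRel G (𝕏' ⊕ ExtD G j)) (Sum.inl x')
        obtain ⟨x, hx⟩ := Quotient.exists_rep (eh.symm (Quotient.mk (orbitRel G 𝕏') x'))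
        rw [← hx]
        have h2 : eh (Quotient.mk (orbitRel G 𝕏) x) = Quotient.mk (orbitRel G 𝕏') x' := by
          rw [hx, Homeomorph.apply_symm_apply]
        have h3 : Quotient.mk (orbitRel G 𝕏') (h x) = Quotient.mk (orbitRel G 𝕏') x' := by
          rw [← h2, heh]; rfl
        have h4 : h x ∈ orbit G x' := Quotient.exact h3
        obtain ⟨g, hg⟩ := h4
        show Quotient.mk (orbitRel G (𝕏' ⊕ ExtD G j)) (H (j x)) = _
        rw [hH₁]
        exact Quotient.sound ⟨g, congrArg Sum.inl hg⟩
      | inr d =>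
        obtain ⟨c, hc⟩ := d
        obtain ⟨y, rfl⟩ := Quotient.exists_rep c
        have hy : y ∉ Set.range j := by
          rintro ⟨x, hx⟩
          exact hc ⟨x, congrArg (Quotient.mk (orbitRel G 𝕐)) hx⟩
        show Quotient.mk (orbitRel G (𝕏' ⊕ ExtD G j)) (H y) = _
        rw [hH₂ y hy]
        exact congrArg _ (congrArg Sum.inr (ExtD.ext' G rfl))
    refine ⟨Continuous.quotient_map' hHcont _, Quotient.lift f' hf'resp,
      fun c => Quotient.ind (motive := fun c => Quotient.lift f' hf'resp (orbitMapOf G H hHeq c) = c) hL c, fun c => Quotient.ind (motive := fun c => orbitMapOf G H hHeq (Quotient.lift f' hf'resp c) = c) hR c, ?_⟩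
    refine Continuous.quotient_lift (continuous_coinduced_dom.mpr ?_) hf'resp
    have hcomp : f' ∘ q = Sum.elim (fun y => Quotient.mk (orbitRel G 𝕐) y)
        (fun x' => orbitMapOf G j hjeq (eh.symm (Quotient.mk (orbitRel G 𝕏') x'))) := by
      funext w
      cases w with
      | inl y => exact hfH y
      | inr x' => rfl
    rw [hcomp]
    exact Continuous.sumElim continuous_coinduced_rng
      ((Continuous.quotient_map' hj.continuous _).comp
        (eh.symm.continuous.comp continuous_coinduced_rng))
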